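/- For every complex number s with Re s > 1, L(χ₄, s) = ζ_{4,1}(s)·ζ_{4,3}(2s)/ζ_{4,3}(s), where ζ_{4,1}(s) = ∏_{p prime, p ≡ 1 (mod 4)} (1 − p^{−s})^{−1} and ζ_{4,3}(s) = ∏_{p prime, p ≡ 3 (mod 4)} (1 − p^{−s})^{−1}, all products converging for Re s > 1. -/
import Mathlib

open Complex

/-- The unique nontrivial Dirichlet character modulo 4, with values in `ℂ`. -/
noncomputable def chiFour : DirichletCharacter ℂ 4 :=
  ZMod.χ₄.ringHomComp (Int.castRingHom ℂ)

/-- The partial Euler factor over primes `p ≡ 1 (mod 4)`: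
`ζ_{4,1}(s) = ∏_{p ≡ 1 mod 4} (1 − p^{−s})⁻¹`. -/
noncomputable def zetaFourOne (s : ℂ) : ℂ :=
  ∏' p : {p : ℕ // p.Prime ∧ p % 4 = 1}, (1 - (p : ℂ) ^ (-s))⁻¹

/-- The partial Euler factor over primes `p ≡ 3 (mod 4)`:
`ζ_{4,3}(s) = ∏_{p ≡ 3 mod 4} (1 − p^{−s})⁻¹`. -/
noncomputable def zetaFourThree (s : ℂ) : ℂ :=
  ∏' p : {p : ℕ // p.Prime ∧ p % 4 = 3}, (1 - (p : ℂ) ^ (-s))⁻¹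

lemma hasProd_aux {ι : Type*} {f : ι → ℂ} (hf : Summable f) (hn : ∀ i, ‖f i‖ < 1) :
    HasProd (fun i => (1 - f i)⁻¹) (Complex.exp (∑' i, -Complex.log (1 - f i))) := by
  have h0 : ∀ i, 1 - f i ≠ 0 := by
    intro i h
    rw [sub_eq_zero] at h
    have := hn i
    rw [← h] at this
    simp at this
  have hsum : Summable fun i => -Complex.log (1 - f i) := hf.clog_one_sub.neg
  exact hsum.hasSum.cexp.congr_fun fun i => by
    simp only [Function.comp_apply, exp_neg, exp_log (h0 i)]

lemma summable_cpow_neg {s : ℂ} (hs : 1 < s.re) :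
    Summable fun n : ℕ => (n : ℂ) ^ (-s) := by
  have := Complex.summable_one_div_nat_cpow (p := s) |>.mpr hs
  exact this.congr fun n => by rw [cpow_neg, one_div]

lemma norm_cpow_lt_one {p : ℕ} (hp : 2 ≤ p) {s : ℂ} (hs : 1 < s.re) :
    ‖(p : ℂ) ^ (-s)‖ < 1 := by
  rw [norm_natCast_cpow_of_pos (by omega)]
  apply Real.rpow_lt_one_of_one_lt_of_neg
  · exact_mod_cast by omega
  · simp only [neg_re]; linarith

/-- For `Re s > 1`, `L(χ₄, s) = ζ_{4,1}(s) ζ_{4,3}(2s) / ζ_{4,3}(s)`, all the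
defining Euler products converging for `Re s > 1`. -/
theorem LFunction_chiFour_eq_partial_euler_products (s : ℂ) (hs : 1 < s.re) :
    Multipliable (fun p : {p : ℕ // p.Prime ∧ p % 4 = 1} => (1 - (p : ℂ) ^ (-s))⁻¹) ∧
    Multipliable (fun p : {p : ℕ // p.Prime ∧ p % 4 = 3} => (1 - (p : ℂ) ^ (-s))⁻¹) ∧
    Multipliable (fun p : {p : ℕ // p.Prime ∧ p % 4 = 3} => (1 - (p : ℂ) ^ (-(2 * s)))⁻¹) ∧
    chiFour.LFunction s = zetaFourOne s * zetaFourThree (2 * s) / zetaFourThree s := by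
  have hs2 : 1 < (2 * s).re := by
    rw [mul_re]; simp; linarith
  -- summability of the families
  have hsub1 : Summable fun p : {p : ℕ // p.Prime ∧ p % 4 = 1} => (p : ℂ) ^ (-s) :=
    (summable_cpow_neg hs).comp_injective Subtype.val_injective
  have hsub3 : Summable fun p : {p : ℕ // p.Prime ∧ p % 4 = 3} => (p : ℂ) ^ (-s) :=
    (summable_cpow_neg hs).comp_injective Subtype.val_injective
  have hsub3' : Summable fun p : {p : ℕ // p.Prime ∧ p % 4 = 3} => (p : ℂ) ^ (-(2 * s)) :=
    (summable_cpow_neg hs2).comp_injective Subtype.val_injective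
  have hn1 : ∀ p : {p : ℕ // p.Prime ∧ p % 4 = 1}, ‖(p : ℂ) ^ (-s)‖ < 1 :=
    fun p => norm_cpow_lt_one p.2.1.two_le hs
  have hn3 : ∀ p : {p : ℕ // p.Prime ∧ p % 4 = 3}, ‖(p : ℂ) ^ (-s)‖ < 1 :=
    fun p => norm_cpow_lt_one p.2.1.two_le hs
  have hn3' : ∀ p : {p : ℕ // p.Prime ∧ p % 4 = 3}, ‖(p : ℂ) ^ (-(2 * s))‖ < 1 :=
    fun p => norm_cpow_lt_one p.2.1.two_le hs2
  -- the four HasProd statements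
  have M1 := hasProd_aux hsub1 hn1
  have M3 := hasProd_aux hsub3 hn3
  have M3' := hasProd_aux hsub3' hn3'
  have M3'' := hasProd_aux hsub3.neg (fun p => by simpa using hn3 p)
  -- M3'' is about (1 - (-(p^(-s))))⁻¹ = (1 + p^(-s))⁻¹
  set a1 := Complex.exp (∑' p : {p : ℕ // p.Prime ∧ p % 4 = 1},
    -Complex.log (1 - (p : ℂ) ^ (-s))) with ha1
  set b3 := Complex.exp (∑' p : {p : ℕ // p.Prime ∧ p % 4 = 3},
    -Complex.log (1 - (p : ℂ) ^ (-s))) with hb3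
  set c3 := Complex.exp (∑' p : {p : ℕ // p.Prime ∧ p % 4 = 3},
    -Complex.log (1 - (p : ℂ) ^ (-(2 * s)))) with hc3
  set d3 := Complex.exp (∑' p : {p : ℕ // p.Prime ∧ p % 4 = 3},
    -Complex.log (1 - -(p : ℂ) ^ (-s))) with hd3
  -- relation b3 * d3 = c3
  have hrel : b3 * d3 = c3 := by
    refine HasProd.unique ((M3.mul M3'').congr_fun fun p => ?_) M3'
    have hp0 : ((p : ℕ) : ℂ) ≠ 0 := Nat.cast_ne_zero.mpr p.2.1.pos.ne'
    have hx : ((p : ℕ) : ℂ) ^ (-(2 * s)) = ((p : ℕ) : ℂ) ^ (-s) * ((p : ℕ) : ℂ) ^ (-s) := by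
      rw [← cpow_add _ _ hp0]; ring_nf
    rw [hx, show (1 : ℂ) - (p : ℂ) ^ (-s) * (p : ℂ) ^ (-s)
      = (1 - (p : ℂ) ^ (-s)) * (1 - -(p : ℂ) ^ (-s)) by ring, mul_inv]
  -- Euler product for the L-function
  have H := DirichletCharacter.LSeries_eulerProduct_hasProd chiFour hs
  -- compute chiFour on the residue classes
  have hchi1 : ∀ n : ℕ, n % 4 = 1 → chiFour (n : ZMod 4) = 1 := by
    intro n hn
    simp [chiFour, MulChar.ringHomComp_apply, ZMod.χ₄_nat_one_mod_four hn]
  have hchi3 : ∀ n : ℕ, n % 4 = 3 → chiFour (n : ZMod 4) = -1 := by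
    intro n hn
    simp [chiFour, MulChar.ringHomComp_apply, ZMod.χ₄_nat_three_mod_four hn]
  have hchi0 : ∀ n : ℕ, n % 2 = 0 → chiFour (n : ZMod 4) = 0 := by
    intro n hn
    have h4 : ZMod.χ₄ (n : ZMod 4) = 0 := by
      rw [ZMod.χ₄_nat_eq_if_mod_four]; simp [hn]
    simp [chiFour, MulChar.ringHomComp_apply, h4]
  -- sets of primes
  set S1 : Set Nat.Primes := {p | (p : ℕ) % 4 = 1} with hS1def
  set S3 : Set Nat.Primes := {p | (p : ℕ) % 4 = 3} with hS3def
  let F : Nat.Primes → ℂ := fun p => (1 - chiFour (p : ℕ) * (p : ℂ) ^ (-s))⁻¹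
  let e1 : {p : ℕ // p.Prime ∧ p % 4 = 1} ≃ S1 :=
    ⟨fun q => ⟨⟨q.1, q.2.1⟩, q.2.2⟩, fun p => ⟨p.1.1, p.1.2, p.2⟩,
      fun _ => rfl, fun _ => rfl⟩
  let e3 : {p : ℕ // p.Prime ∧ p % 4 = 3} ≃ S3 :=
    ⟨fun q => ⟨⟨q.1, q.2.1⟩, q.2.2⟩, fun p => ⟨p.1.1, p.1.2, p.2⟩,
      fun _ => rfl, fun _ => rfl⟩
  have hP1 : HasProd (F ∘ (↑) : S1 → ℂ) a1 := by
    refine e1.hasProd_iff.mp (M1.congr_fun fun q => ?_)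
    show (1 - chiFour (q.1 : ℕ) * ((q.1 : ℕ) : ℂ) ^ (-s))⁻¹ = _
    rw [hchi1 q.1 q.2.2, one_mul]
  have hP3 : HasProd (F ∘ (↑) : S3 → ℂ) d3 := by
    refine e3.hasProd_iff.mp (M3''.congr_fun fun q => ?_)
    show (1 - chiFour (q.1 : ℕ) * ((q.1 : ℕ) : ℂ) ^ (-s))⁻¹ = _
    rw [hchi3 q.1 q.2.2, neg_one_mul]
  have hPc : HasProd (F ∘ (↑) : ((S1 ∪ S3)ᶜ : Set Nat.Primes) → ℂ) 1 := by
    refine hasProd_one.congr_fun fun p => ?_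
    have h1 : ((p.1 : ℕ) : ℕ) % 4 ≠ 1 := fun h => p.2 (Set.mem_union_left _ h)
    have h3 : ((p.1 : ℕ) : ℕ) % 4 ≠ 3 := fun h => p.2 (Set.mem_union_right _ h)
    have heven : ((p.1 : ℕ) : ℕ) % 2 = 0 := by omega
    show (1 - chiFour ((p.1 : ℕ) : ℕ) * (((p.1 : ℕ) : ℕ) : ℂ) ^ (-s))⁻¹ = 1
    rw [hchi0 _ heven, zero_mul, sub_zero, inv_one]
  have hdisj : Disjoint S1 S3 := by
    rw [Set.disjoint_left]
    intro p h1 h3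
    rw [hS1def] at h1; rw [hS3def] at h3
    simp only [Set.mem_setOf_eq] at h1 h3
    omega
  have Hfull : HasProd F ((a1 * d3) * 1) := (hP1.mul_disjoint hdisj hP3).mul_compl hPc
  have hval : LSeries (fun n => chiFour n) s = a1 * d3 := by
    have := H.unique Hfull
    rw [this, mul_one]
  refine ⟨M1.multipliable, M3.multipliable, M3'.multipliable, ?_⟩
  have hz1 : zetaFourOne s = a1 := M1.tprod_eq
  have hz3 : zetaFourThree s = b3 := M3.tprod_eq
  have hz3' : zetaFourThree (2 * s) = c3 := M3'.tprod_eq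
  rw [DirichletCharacter.LFunction_eq_LSeries chiFour hs, hval, hz1, hz3, hz3', ← hrel]
  have hbne : b3 ≠ 0 := by rw [hb3]; exact Complex.exp_ne_zero _
  rw [mul_comm b3 d3, ← mul_assoc, mul_div_assoc, div_self hbne, mul_one]
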